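/- Fix n ≥ 2 servers with convex, nondecreasing, continuously differentiable delay functions having equal uncongested delays, and fix an attack strength α ≥ 0. If x̃ is a team equilibrium with machine penetration level r and x̃′ is a team equilibrium with machine penetration level r′, where r > r′, then C^α(x̃) ≤ C^α(x̃′). In particular, every team equilibrium has cost no greater than that of a fully selfish equilibrium (the case r′ = 0). -/

import Mathlib

open Finset

/-- System cost `C^α(x) = (1/n) ∑ᵢ xᵢ τᵢ(xᵢ) + α x₁ / n` (server 1 is index 0). -/
noncomputable def cost (n : ℕ) [NeZero n] (τ : Fin n → ℝ → ℝ) (α : ℝ) (x : Fin n → ℝ) : ℝ :=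
  (∑ i, x i * τ i (x i)) / (n : ℝ) + α * x 0 / (n : ℝ)

/-- Attacked delay functions: `τ₁^α = τ₁ + α`, `τᵢ^α = τᵢ` for `i > 1`. -/
noncomputable def tauA (n : ℕ) [NeZero n] (τ : Fin n → ℝ → ℝ) (α : ℝ) (i : Fin n) (z : ℝ) : ℝ :=
  τ i z + if i = 0 then α else 0

/-- A (partial) scheduling profile of total mass `mass`: nonnegative with entries summing to `mass`. -/
def IsProfile (n : ℕ) (mass : ℝ) (x : Fin n → ℝ) : Prop :=
  (∀ i, 0 ≤ x i) ∧ ∑ i, x i = mass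

/-- Team equilibrium: the selfish mass `n - ∑ r k` is scheduled by `xs`, machine `k`
schedules mass `r k` via `xk k`; every machine schedules globally optimally given the
others, and every selfish job is on a minimum-delay server. -/
def IsTeamEq (n m : ℕ) [NeZero n] (τ : Fin n → ℝ → ℝ) (α : ℝ) (r : Fin m → ℝ)
    (xs : Fin n → ℝ) (xk : Fin m → Fin n → ℝ) : Prop :=
  IsProfile n ((n : ℝ) - ∑ k, r k) xs ∧
  (∀ k, IsProfile n (r k) (xk k)) ∧
  (∀ k, ∀ y : Fin n → ℝ, IsProfile n (r k) y →
    cost n τ α (xs + ∑ j, xk j) ≤ cost n τ α (xs + y + ∑ j ∈ univ.erase k, xk j)) ∧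
  (∀ i, 0 < xs i → ∀ j,
    tauA n τ α i ((xs + ∑ l, xk l) i) ≤ tauA n τ α j ((xs + ∑ l, xk l) j))


lemma TE_mul_convexOn (f : ℝ → ℝ) (hc : ConvexOn ℝ (Set.Ici 0) f)
    (hm : MonotoneOn f (Set.Ici 0)) : ConvexOn ℝ (Set.Ici 0) (fun t => t * f t) := by
  refine ⟨convex_Ici 0, ?_⟩
  intro p hp q hq a b ha hb hab
  simp only [smul_eq_mul]
  have hp0 : (0:ℝ) ≤ p := hp
  have hq0 : (0:ℝ) ≤ q := hq
  have hm0 : (0:ℝ) ≤ a*p + b*q := by positivity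
  have hfc := hc.2 hp hq ha hb hab
  simp only [smul_eq_mul] at hfc
  have h1 : (a*p + b*q) * f (a*p+b*q) ≤ (a*p+b*q) * (a * f p + b * f q) :=
    mul_le_mul_of_nonneg_left hfc hm0
  have key : 0 ≤ (p - q) * (f p - f q) := by
    rcases le_total p q with h | h
    · have := hm hp hq h
      nlinarith
    · have := hm hq hp h
      nlinarith
  have key2 : 0 ≤ a*b*((p-q)*(f p - f q)) := mul_nonneg (mul_nonneg ha hb) key
  have expand : a * (p * f p) + b * (q * f q) - (a*p+b*q) * (a * f p + b * f q)
      = a*b*((p-q)*(f p - f q)) := by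
    linear_combination (-(a*(p*f p) + b*(q*f q)))*hab
  linarith [h1, key2, expand]


lemma TE_slope_comm (f : ℝ → ℝ) (x y : ℝ) : (f y - f x)/(y - x) = (f x - f y)/(x - y) := by
  rw [← neg_sub (f y) (f x), ← neg_sub y x, neg_div_neg_eq]

/-- slope over [a,b] ≤ slope over [c,d] when a < b ≤ c < d, all in [0,∞). -/
lemma TE_sl_disj (f : ℝ → ℝ) (hf : ConvexOn ℝ (Set.Ici 0) f) {a b c d : ℝ}
    (ha : 0 ≤ a) (hab : a < b) (hbc : b ≤ c) (hcd : c < d) :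
    (f b - f a)/(b - a) ≤ (f d - f c)/(d - c) := by
  rcases eq_or_lt_of_le hbc with rfl | hbc'
  · exact hf.slope_mono_adjacent (Set.mem_Ici.mpr ha) (Set.mem_Ici.mpr (by linarith)) hab hcd
  · calc (f b - f a)/(b - a) ≤ (f c - f b)/(c - b) :=
          hf.slope_mono_adjacent (Set.mem_Ici.mpr ha) (Set.mem_Ici.mpr (by linarith)) hab hbc'
      _ ≤ (f d - f c)/(d - c) :=
          hf.slope_mono_adjacent (Set.mem_Ici.mpr (by linarith)) (Set.mem_Ici.mpr (by linarith)) hbc' hcd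

/-- slope over [a,b] ≤ slope over [a,d] for a < b ≤ d (left endpoint shared). -/
lemma TE_sl_left (f : ℝ → ℝ) (hf : ConvexOn ℝ (Set.Ici 0) f) {a b d : ℝ}
    (ha : 0 ≤ a) (hab : a < b) (hbd : b ≤ d) :
    (f b - f a)/(b - a) ≤ (f d - f a)/(d - a) :=
  hf.secant_mono (Set.mem_Ici.mpr ha) (Set.mem_Ici.mpr (by linarith)) (Set.mem_Ici.mpr (by linarith))
    (by linarith) (by linarith) hbd

/-- slope over [a,d] ≤ slope over [c,d] for a ≤ c < d (right endpoint shared). -/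
lemma TE_sl_right (f : ℝ → ℝ) (hf : ConvexOn ℝ (Set.Ici 0) f) {a c d : ℝ}
    (ha : 0 ≤ a) (hac : a ≤ c) (hcd : c < d) :
    (f d - f a)/(d - a) ≤ (f d - f c)/(d - c) := by
  rw [TE_slope_comm f a d, TE_slope_comm f c d]
  exact hf.secant_mono (Set.mem_Ici.mpr (by linarith)) (Set.mem_Ici.mpr ha)
    (Set.mem_Ici.mpr (by linarith)) (by linarith) (by linarith) hac

/-- increments: f b - f a ≤ f d - f c when the intervals have equal length, a < b ≤ c < d. -/
lemma TE_incr (f : ℝ → ℝ) (hf : ConvexOn ℝ (Set.Ici 0) f) {a b c d : ℝ}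
    (ha : 0 ≤ a) (hab : a < b) (hbc : b ≤ c) (hcd : c < d) (hlen : b - a = d - c) :
    f b - f a ≤ f d - f c := by
  have h := TE_sl_disj f hf ha hab hbc hcd
  rw [div_le_div_iff₀ (by linarith) (by linarith)] at h
  rw [← hlen] at h
  exact le_of_mul_le_mul_right h (by linarith)

noncomputable def TEG (n : ℕ) [NeZero n] (τ : Fin n → ℝ → ℝ) (α : ℝ) (i : Fin n) (t : ℝ) : ℝ :=
  t * tauA n τ α i t

lemma TE_cost_eq (n : ℕ) [NeZero n] (τ : Fin n → ℝ → ℝ) (α : ℝ) (z : Fin n → ℝ) :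
    cost n τ α z = (∑ i, TEG n τ α i (z i)) / n := by
  simp only [cost, TEG, tauA, mul_add, Finset.sum_add_distrib, mul_ite, mul_zero]
  rw [Finset.sum_ite_eq' univ (0 : Fin n) (fun i => z i * α)]
  simp only [mem_univ, if_true]
  ring

lemma TE_npos (n : ℕ) [NeZero n] : (0:ℝ) < n :=
  Nat.cast_pos.mpr (Nat.pos_of_ne_zero (NeZero.ne n))

lemma TE_machine_move (n : ℕ) [NeZero n] (τ : Fin n → ℝ → ℝ) (α : ℝ)
    (m : ℕ) (r : Fin m → ℝ) (xs : Fin n → ℝ) (xk : Fin m → Fin n → ℝ)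
    (heq : IsTeamEq n m τ α r xs xk)
    (x : Fin n → ℝ) (hx : x = xs + ∑ l, xk l)
    (w j : Fin n) (hwj : w ≠ j) (k : Fin m) (ε : ℝ) (hε : 0 < ε) (hεk : ε ≤ xk k w) :
    TEG n τ α w (x w) - TEG n τ α w (x w - ε)
      ≤ TEG n τ α j (x j + ε) - TEG n τ α j (x j) := by
  obtain ⟨hxs, hks, hopt, hself⟩ := heq
  set y : Fin n → ℝ := fun i => xk k i + ((if i = j then ε else 0) - (if i = w then ε else 0))
    with hy
  have hyprof : IsProfile n (r k) y := by
    constructor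
    · intro i
      have hk0 := (hks k).1 i
      rw [hy]
      dsimp only
      split_ifs with h1 h2
      · exact absurd (h2.symm.trans h1) hwj
      · linarith
      · rename_i h2'
        rw [h2']
        linarith
      · linarith
    · rw [hy]
      rw [Finset.sum_add_distrib, Finset.sum_sub_distrib,
        Finset.sum_ite_eq' univ j (fun _ => ε), Finset.sum_ite_eq' univ w (fun _ => ε)]
      simp [(hks k).2]
  have hzeq : xs + y + ∑ l ∈ univ.erase k, xk l
      = fun i => x i + ((if i = j then ε else 0) - (if i = w then ε else 0)) := by
    funext i
    have herase : ∑ l ∈ univ.erase k, xk l i = (∑ l, xk l i) - xk k i :=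
      Finset.sum_erase_eq_sub (mem_univ k)
    simp only [Pi.add_apply, Finset.sum_apply, hx, hy]
    rw [herase]
    ring
  have h := hopt k y hyprof
  rw [TE_cost_eq, TE_cost_eq, hzeq, ← hx] at h
  have hn := TE_npos n
  rw [div_le_div_iff₀ hn hn] at h
  have h3 := le_of_mul_le_mul_right h hn
  have h2 : ∑ i, TEG n τ α i (x i + ((if i = j then ε else 0) - (if i = w then ε else 0)))
      = (∑ i, TEG n τ α i (x i))
        + ((TEG n τ α j (x j + ε) - TEG n τ α j (x j))
          + (TEG n τ α w (x w - ε) - TEG n τ α w (x w))) := by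
    have hsplit : ∀ i, TEG n τ α i (x i + ((if i = j then ε else 0) - (if i = w then ε else 0)))
        = TEG n τ α i (x i)
          + ((if i = j then TEG n τ α j (x j + ε) - TEG n τ α j (x j) else 0)
            + (if i = w then TEG n τ α w (x w - ε) - TEG n τ α w (x w) else 0)) := by
      intro i
      by_cases h1 : i = j
      · have h2' : ¬ i = w := by rw [h1]; exact Ne.symm hwj
        rw [if_pos h1, if_neg h2', if_pos h1, if_neg h2', h1]
        ring
      · by_cases h2' : i = w
        · rw [if_neg h1, if_pos h2', if_neg h1, if_pos h2', h2']
          ring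
        · rw [if_neg h1, if_neg h2', if_neg h1, if_neg h2']
          ring
    rw [Finset.sum_congr rfl (fun i _ => hsplit i)]
    rw [Finset.sum_add_distrib, Finset.sum_add_distrib,
      Finset.sum_ite_eq' univ j, Finset.sum_ite_eq' univ w]
    simp
  rw [h2] at h3
  linarith

set_option maxHeartbeats 1000000 in
/-- team equilibrium cost is monotone nonincreasing in the machine
penetration level; in particular no worse than a fully selfish equilibrium. -/
theorem team_equilibrium_cost_monotone (n : ℕ) [NeZero n] (hn : 2 ≤ n)
    (τ : Fin n → ℝ → ℝ)
    (hconv : ∀ i, ConvexOn ℝ (Set.Ici 0) (τ i))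
    (hmono : ∀ i, MonotoneOn (τ i) (Set.Ici 0))
    (hsmooth : ∀ i, ContDiffOn ℝ 1 (τ i) (Set.Ici 0))
    (hzero : ∀ i j, τ i 0 = τ j 0)
    (α : ℝ) (hα : 0 ≤ α)
    (m m' : ℕ) (hm : 1 ≤ m) (hm' : 1 ≤ m')
    (r : Fin m → ℝ) (r' : Fin m' → ℝ)
    (hr : ∀ k, 0 ≤ r k) (hr' : ∀ k, 0 ≤ r' k)
    (hrsum : ∑ k, r k ≤ (n : ℝ)) (hrsum' : ∑ k, r' k ≤ (n : ℝ))
    (hlt : ∑ k, r' k < ∑ k, r k)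
    (xs : Fin n → ℝ) (xk : Fin m → Fin n → ℝ)
    (xs' : Fin n → ℝ) (xk' : Fin m' → Fin n → ℝ)
    (heq : IsTeamEq n m τ α r xs xk) (heq' : IsTeamEq n m' τ α r' xs' xk') :
    cost n τ α (xs + ∑ j, xk j) ≤ cost n τ α (xs' + ∑ j, xk' j) := by
  classical
  set x := xs + ∑ j, xk j with hxdef
  set x' := xs' + ∑ j, xk' j with hx'def
  have hxs0 : ∀ i, 0 ≤ xs i := heq.1.1
  have hxssum : ∑ i, xs i = (n : ℝ) - ∑ k, r k := heq.1.2
  have hks : ∀ k, IsProfile n (r k) (xk k) := heq.2.1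
  have hxs'0 : ∀ i, 0 ≤ xs' i := heq'.1.1
  have hxs'sum : ∑ i, xs' i = (n : ℝ) - ∑ k, r' k := heq'.1.2
  have hks' : ∀ k, IsProfile n (r' k) (xk' k) := heq'.2.1
  have hxapp : ∀ i, x i = xs i + ∑ l, xk l i := by
    intro i; rw [hxdef]; simp [Finset.sum_apply]
  have hx'app : ∀ i, x' i = xs' i + ∑ l, xk' l i := by
    intro i; rw [hx'def]; simp [Finset.sum_apply]
  have hxsle : ∀ i, xs i ≤ x i := by
    intro i
    have h0 : 0 ≤ ∑ l, xk l i := Finset.sum_nonneg fun l _ => (hks l).1 i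
    rw [hxapp i]; linarith
  have hxs'le : ∀ i, xs' i ≤ x' i := by
    intro i
    have h0 : 0 ≤ ∑ l, xk' l i := Finset.sum_nonneg fun l _ => (hks' l).1 i
    rw [hx'app i]; linarith
  have hx0 : ∀ i, 0 ≤ x i := fun i => le_trans (hxs0 i) (hxsle i)
  have hx'0 : ∀ i, 0 ≤ x' i := fun i => le_trans (hxs'0 i) (hxs'le i)
  have hxsum : ∑ i, x i = (n : ℝ) := by
    calc ∑ i, x i = ∑ i, (xs i + ∑ l, xk l i) := Finset.sum_congr rfl fun i _ => hxapp i
      _ = (∑ i, xs i) + ∑ i, ∑ l, xk l i := Finset.sum_add_distrib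
      _ = ((n : ℝ) - ∑ k, r k) + ∑ l, ∑ i, xk l i := by rw [hxssum, Finset.sum_comm]
      _ = ((n : ℝ) - ∑ k, r k) + ∑ l, r l := by
            rw [Finset.sum_congr rfl fun l (_ : l ∈ univ) => (hks l).2]
      _ = (n : ℝ) := by ring
  have hx'sum : ∑ i, x' i = (n : ℝ) := by
    calc ∑ i, x' i = ∑ i, (xs' i + ∑ l, xk' l i) := Finset.sum_congr rfl fun i _ => hx'app i
      _ = (∑ i, xs' i) + ∑ i, ∑ l, xk' l i := Finset.sum_add_distrib
      _ = ((n : ℝ) - ∑ k, r' k) + ∑ l, ∑ i, xk' l i := by rw [hxs'sum, Finset.sum_comm]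
      _ = ((n : ℝ) - ∑ k, r' k) + ∑ l, r' l := by
            rw [Finset.sum_congr rfl fun l (_ : l ∈ univ) => (hks' l).2]
      _ = (n : ℝ) := by ring
  have hselfx : ∀ i, 0 < xs i → ∀ p, tauA n τ α i (x i) ≤ tauA n τ α p (x p) := by
    intro i hi p
    have h := heq.2.2.2 i hi p
    rwa [← hxdef] at h
  have hselfx' : ∀ i, 0 < xs' i → ∀ p, tauA n τ α i (x' i) ≤ tauA n τ α p (x' p) := by
    intro i hi p
    have h := heq'.2.2.2 i hi p
    rwa [← hx'def] at h
  have hTmono : ∀ i, MonotoneOn (fun t => tauA n τ α i t) (Set.Ici 0) := by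
    intro i a ha b hb hab
    simp only [tauA]
    exact add_le_add_left (hmono i ha hb hab) _
  have hTm : ∀ i a b, 0 ≤ a → a ≤ b → tauA n τ α i a ≤ tauA n τ α i b := by
    intro i a b ha hab
    simp only [tauA]
    exact add_le_add_left (hmono i (Set.mem_Ici.mpr ha) (Set.mem_Ici.mpr (le_trans ha hab)) hab) _
  have hTconv : ∀ i, ConvexOn ℝ (Set.Ici 0) (fun t => tauA n τ α i t) := by
    intro i
    simp only [tauA]
    exact (hconv i).add (convexOn_const _ (convex_Ici 0))
  have hGconv : ∀ i, ConvexOn ℝ (Set.Ici 0) (fun t => TEG n τ α i t) := by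
    intro i
    have := TE_mul_convexOn (fun t => tauA n τ α i t) (hTconv i) (hTmono i)
    simpa [TEG] using this
  have hne : ((univ : Finset (Fin n))).Nonempty := ⟨0, mem_univ 0⟩
  set L := (univ : Finset (Fin n)).inf' hne (fun p => tauA n τ α p (x p)) with hLdef
  set L' := (univ : Finset (Fin n)).inf' hne (fun p => tauA n τ α p (x' p)) with hL'def
  have hLle : ∀ p, L ≤ tauA n τ α p (x p) := fun p => Finset.inf'_le _ (mem_univ p)
  have hL'le : ∀ p, L' ≤ tauA n τ α p (x' p) := fun p => Finset.inf'_le _ (mem_univ p)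
  -- ══════ LEMMA A : L ≤ L' ══════
  have hLL' : L ≤ L' := by
    by_contra hcon
    push_neg at hcon
    have hsum_lt : ∑ i, xs i < ∑ i, xs' i := by rw [hxssum, hxs'sum]; linarith
    obtain ⟨w, -, hw⟩ := Finset.exists_lt_of_sum_lt hsum_lt
    have hxs'w : 0 < xs' w := lt_of_le_of_lt (hxs0 w) hw
    have hTw := hselfx' w hxs'w
    have hTwL' : tauA n τ α w (x' w) = L' :=
      le_antisymm (Finset.le_inf' hne _ (fun p _ => hTw p)) (hL'le w)
    have hxw : x' w < x w := by
      by_contra hge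
      push_neg at hge
      have h1 := hTm w (x w) (x' w) (hx0 w) hge
      have h2 := hLle w
      rw [hTwL'] at h1
      linarith
    have hexj : ∃ j, x j < x' j := by
      by_contra hno
      push_neg at hno
      have hlt2 : ∑ i, x' i < ∑ i, x i :=
        Finset.sum_lt_sum (fun i _ => hno i) ⟨w, mem_univ w, hxw⟩
      rw [hxsum, hx'sum] at hlt2
      linarith
    obtain ⟨j, hj⟩ := hexj
    have hwj : w ≠ j := by
      intro h
      rw [h] at hxw
      linarith
    have hxs'j : xs' j = 0 := by
      by_contra hne0
      have hpos : 0 < xs' j := lt_of_le_of_ne (hxs'0 j) (Ne.symm hne0)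
      have h1 := hselfx' j hpos w
      have h2 := hTm j (x j) (x' j) (hx0 j) (le_of_lt hj)
      have h3 := hLle j
      rw [hTwL'] at h1
      linarith
    have hXj : 0 < ∑ l, xk' l j := by
      have h1 := hx'app j
      rw [hxs'j] at h1
      have h2 := hx0 j
      linarith
    have hexk' : ∃ k', 0 < xk' k' j := by
      by_contra hno
      push_neg at hno
      have : ∑ l, xk' l j ≤ 0 := Finset.sum_nonpos fun l _ => hno l
      linarith
    obtain ⟨k', hk'⟩ := hexk'
    have hXw : 0 < ∑ l, xk l w := by
      have h1 := hxs'le w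
      have h2 := hxapp w
      linarith
    have hexk : ∃ k, 0 < xk k w := by
      by_contra hno
      push_neg at hno
      have : ∑ l, xk l w ≤ 0 := Finset.sum_nonpos fun l _ => hno l
      linarith
    obtain ⟨k, hk⟩ := hexk
    set ε := min (min (xk k w) (xk' k' j)) (min ((x w - x' w)/2) ((x' j - x j)/2)) with hεdef
    have hε : 0 < ε :=
      lt_min (lt_min hk hk') (lt_min (by linarith) (by linarith))
    have hε1 : ε ≤ xk k w := le_trans (min_le_left _ _) (min_le_left _ _)
    have hε2 : ε ≤ xk' k' j := le_trans (min_le_left _ _) (min_le_right _ _)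
    have hεr : ε ≤ min ((x w - x' w)/2) ((x' j - x j)/2) :=
      min_le_right (min (xk k w) (xk' k' j)) (min ((x w - x' w)/2) ((x' j - x j)/2))
    have hε3 : 2*ε ≤ x w - x' w := by
      have h2 : min ((x w - x' w)/2) ((x' j - x j)/2) ≤ (x w - x' w)/2 := min_le_left _ _
      linarith
    have hε4 : 2*ε ≤ x' j - x j := by
      have h2 : min ((x w - x' w)/2) ((x' j - x j)/2) ≤ (x' j - x j)/2 := min_le_right _ _
      linarith
    have M1 := TE_machine_move n τ α m r xs xk heq x hxdef w j hwj k ε hε hε1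
    have M2 := TE_machine_move n τ α m' r' xs' xk' heq' x' hx'def j w (Ne.symm hwj) k' ε hε hε2
    have I1 : TEG n τ α w (x' w + ε) - TEG n τ α w (x' w)
        ≤ TEG n τ α w (x w) - TEG n τ α w (x w - ε) :=
      TE_incr _ (hGconv w) (hx'0 w) (by linarith) (by linarith) (by linarith) (by ring)
    have I2 : TEG n τ α j (x j + ε) - TEG n τ α j (x j)
        ≤ TEG n τ α j (x' j) - TEG n τ α j (x' j - ε) :=
      TE_incr _ (hGconv j) (hx0 j) (by linarith) (by linarith) (by linarith) (by ring)
    have Ebot : TEG n τ α w (x' w + ε) - TEG n τ α w (x' w)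
        = TEG n τ α w (x w) - TEG n τ α w (x w - ε) :=
      le_antisymm I1 (by linarith)
    set a0 := x' w with ha0def
    set a2 := x w with ha2def
    have ha0 : 0 < a0 := lt_of_lt_of_le (lt_of_le_of_lt (hxs0 w) hw) (hxs'le w)
    have ha2 : 0 < a2 := lt_trans ha0 hxw
    set s := (TEG n τ α w (a0 + ε) - TEG n τ α w a0)/ε with hsdef
    set mm0 := (a0 + a2)/2 with hm0def
    have ham : a0 < mm0 := by rw [hm0def]; linarith
    have hma : mm0 < a2 := by rw [hm0def]; linarith
    -- pin the two half-slopes to s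
    have eA : (TEG n τ α w (a0 + ε) - TEG n τ α w a0)/((a0 + ε) - a0) = s := by
      rw [hsdef, add_sub_cancel_left]
    have eB : (TEG n τ α w a2 - TEG n τ α w (a2 - ε))/(a2 - (a2 - ε)) = s := by
      rw [show a2 - (a2 - ε) = ε by ring, hsdef, Ebot]
    have sl1 : (TEG n τ α w mm0 - TEG n τ α w a0)/(mm0 - a0)
        ≤ (TEG n τ α w a2 - TEG n τ α w mm0)/(a2 - mm0) :=
      TE_sl_disj _ (hGconv w) (le_of_lt ha0) ham (le_refl mm0) hma
    have sl2 : (TEG n τ α w (a0 + ε) - TEG n τ α w a0)/((a0 + ε) - a0)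
        ≤ (TEG n τ α w mm0 - TEG n τ α w a0)/(mm0 - a0) :=
      TE_sl_left _ (hGconv w) (le_of_lt ha0) (by linarith) (by rw [hm0def]; linarith)
    have sl3 : (TEG n τ α w a2 - TEG n τ α w mm0)/(a2 - mm0)
        ≤ (TEG n τ α w a2 - TEG n τ α w (a2 - ε))/(a2 - (a2 - ε)) :=
      TE_sl_right _ (hGconv w) (by linarith) (by rw [hm0def]; linarith) (by linarith)
    rw [eA] at sl2
    rw [eB] at sl3
    have hA : (TEG n τ α w mm0 - TEG n τ α w a0)/(mm0 - a0) = s :=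
      le_antisymm (by linarith) sl2
    have hB : (TEG n τ α w a2 - TEG n τ α w mm0)/(a2 - mm0) = s :=
      le_antisymm sl3 (by linarith)
    have lin1 : TEG n τ α w mm0 - TEG n τ α w a0 = s*(mm0 - a0) := by
      rw [← hA, div_mul_cancel₀]
      exact ne_of_gt (by linarith)
    have lin2 : TEG n τ α w a2 - TEG n τ α w mm0 = s*(a2 - mm0) := by
      rw [← hB, div_mul_cancel₀]
      exact ne_of_gt (by linarith)
    set v0 := tauA n τ α w a0 with hv0def
    set v1 := tauA n τ α w mm0 with hv1def
    set v2 := tauA n τ α w a2 with hv2def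
    have g0 : TEG n τ α w a0 = a0 * v0 := rfl
    have g1 : TEG n τ α w mm0 = mm0 * v1 := rfl
    have g2 : TEG n τ α w a2 = a2 * v2 := rfl
    rw [g0, g1] at lin1
    rw [g1, g2] at lin2
    have key1 : a0*(v0 - s) = mm0*(v1 - s) := by linear_combination (-1 : ℝ)*lin1
    have key2 : mm0*(v1 - s) = a2*(v2 - s) := by linear_combination (-1 : ℝ)*lin2
    have keyc : a0*(v0 - s) = a2*(v2 - s) := key1.trans key2
    have hv02 : v0 < v2 := by
      have h1 : v0 = L' := hTwL'
      have h2 : L ≤ v2 := hLle w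
      linarith
    have hmid : v1 ≤ (v0 + v2)/2 := by
      have h := (hTconv w).2 (Set.mem_Ici.mpr (le_of_lt ha0)) (Set.mem_Ici.mpr (le_of_lt ha2))
        (by norm_num : (0:ℝ) ≤ 1/2) (by norm_num : (0:ℝ) ≤ 1/2) (by norm_num)
      simp only [smul_eq_mul] at h
      have hmp : (1/2 : ℝ) * a0 + (1/2 : ℝ) * a2 = mm0 := by rw [hm0def]; ring
      rw [hmp] at h
      have h2 : v1 ≤ 1/2 * v0 + 1/2 * v2 := h
      linarith
    have hβ : a2*(v2 - s) < 0 := by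
      have e1' : a0*a2*(v2 - v0) = (a0 - a2)*(a2*(v2 - s)) := by
        linear_combination (-a2)*keyc
      have hpos : 0 < a0*a2*(v2 - v0) := by
        apply mul_pos (mul_pos ha0 ha2)
        linarith
      rw [e1'] at hpos
      by_contra hge
      push_neg at hge
      have : (a0 - a2)*(a2*(v2 - s)) ≤ 0 :=
        mul_nonpos_of_nonpos_of_nonneg (by linarith) hge
      linarith
    have hE : a0*a2*((a0+a2)/2)*(v0 + v2 - 2*v1) = (a2*(v2-s))*(a0-a2)^2/2 := by
      have key2m : ((a0+a2)/2)*(v1 - s) = a2*(v2 - s) := by rw [← hm0def]; exact key2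
      linear_combination (a2*((a0+a2)/2))*keyc - (2*a0*a2)*key2m
    have hfin : 0 ≤ v0 + v2 - 2*v1 := by linarith
    have hLnn : 0 ≤ a0*a2*((a0+a2)/2)*(v0 + v2 - 2*v1) := by
      apply mul_nonneg _ hfin
      positivity
    rw [hE] at hLnn
    have hsq : 0 < (a0 - a2)^2 := by
      have : a0 - a2 ≠ 0 := by linarith
      positivity
    have hneg : (a2*(v2-s))*(a0-a2)^2 < 0 := mul_neg_of_neg_of_pos hβ hsq
    linarith [hLnn, hneg]
  -- ══════ MAIN ARGUMENT ══════
  rw [TE_cost_eq, TE_cost_eq]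
  have hnpos := TE_npos n
  rw [div_le_div_iff₀ hnpos hnpos]
  apply mul_le_mul_of_nonneg_right _ (le_of_lt hnpos)
  by_cases hU : ∃ p, x p < x' p
  case neg =>
    push_neg at hU
    have hss : ∑ i, x' i = ∑ i, x i := by rw [hxsum, hx'sum]
    have hall : ∀ i ∈ (univ : Finset (Fin n)), x' i = x i :=
      (Finset.sum_eq_sum_iff_of_le (fun i _ => hU i)).mp hss
    apply le_of_eq
    exact Finset.sum_congr rfl fun i _ => by rw [hall i (mem_univ i)]
  case pos =>
    obtain ⟨j0, hj0⟩ := hU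
    set Us := univ.filter (fun p => x p < x' p) with hUs
    have hUsne : Us.Nonempty := ⟨j0, by simp [hUs, hj0]⟩
    set κ := Us.inf' hUsne (fun p => (TEG n τ α p (x' p) - TEG n τ α p (x p))/(x' p - x p))
      with hκ
    have hup : ∀ p, x p < x' p →
        κ*(x' p - x p) ≤ TEG n τ α p (x' p) - TEG n τ α p (x p) := by
      intro p hp
      have h1 : κ ≤ (TEG n τ α p (x' p) - TEG n τ α p (x p))/(x' p - x p) :=
        Finset.inf'_le _ (by simp [hUs, hp])
      rw [le_div_iff₀ (by linarith)] at h1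
      linarith
    have hdown : ∀ i, x' i < x i →
        TEG n τ α i (x i) - TEG n τ α i (x' i) ≤ κ*(x i - x' i) := by
      intro i hi
      have hslope : (TEG n τ α i (x i) - TEG n τ α i (x' i))/(x i - x' i) ≤ κ := by
        rw [hκ]
        apply Finset.le_inf'
        intro p hp
        rw [hUs, mem_filter] at hp
        have hp2 : x p < x' p := hp.2
        have hip : i ≠ p := by
          intro h
          rw [h] at hi
          linarith
        rcases lt_or_eq_of_le (hxsle i) with hmach | hselfcase
        · -- machine case: xs i < x i
          have hXi : 0 < ∑ l, xk l i := by
            have := hxapp i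
            linarith
          have hexk : ∃ k, 0 < xk k i := by
            by_contra hno
            push_neg at hno
            have : ∑ l, xk l i ≤ 0 := Finset.sum_nonpos fun l _ => hno l
            linarith
          obtain ⟨k, hk⟩ := hexk
          set ε := min (xk k i) (min (x i - x' i) (x' p - x p)) with hεdef
          have hε : 0 < ε := lt_min hk (lt_min (by linarith) (by linarith))
          have hε1 : ε ≤ xk k i := min_le_left _ _
          have hε2 : ε ≤ x i - x' i := le_trans (min_le_right _ _) (min_le_left _ _)
          have hε3 : ε ≤ x' p - x p := le_trans (min_le_right _ _) (min_le_right _ _)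
          have M := TE_machine_move n τ α m r xs xk heq x hxdef i p hip k ε hε hε1
          have s1 : (TEG n τ α i (x i) - TEG n τ α i (x' i))/(x i - x' i)
              ≤ (TEG n τ α i (x i) - TEG n τ α i (x i - ε))/(x i - (x i - ε)) :=
            TE_sl_right _ (hGconv i) (hx'0 i) (by linarith) (by linarith)
          have s2 : (TEG n τ α i (x i) - TEG n τ α i (x i - ε))/(x i - (x i - ε))
              ≤ (TEG n τ α p (x p + ε) - TEG n τ α p (x p))/((x p + ε) - x p) := by
            rw [show x i - (x i - ε) = ε by ring, show (x p + ε) - x p = ε by ring]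
            exact div_le_div_of_nonneg_right M (le_of_lt hε)
          have s3 : (TEG n τ α p (x p + ε) - TEG n τ α p (x p))/((x p + ε) - x p)
              ≤ (TEG n τ α p (x' p) - TEG n τ α p (x p))/(x' p - x p) :=
            TE_sl_left _ (hGconv p) (hx0 p) (by linarith) (by linarith)
          linarith
        · -- selfish case: xs i = x i
          have hxsi : 0 < xs i := by
            have := hx'0 i
            rw [hselfcase]
            linarith
          have hTi := hselfx i hxsi
          have hTle : tauA n τ α i (x i) ≤ tauA n τ α i (x' i) := by
            have h1 : tauA n τ α i (x i) ≤ L := Finset.le_inf' hne _ (fun q _ => hTi q)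
            have h2 := hL'le i
            linarith
          have bound1 : (TEG n τ α i (x i) - TEG n τ α i (x' i))/(x i - x' i)
              ≤ tauA n τ α i (x i) := by
            rw [div_le_iff₀ (by linarith)]
            have hg1 : TEG n τ α i (x i) = x i * tauA n τ α i (x i) := rfl
            have hg2 : TEG n τ α i (x' i) = x' i * tauA n τ α i (x' i) := rfl
            rw [hg1, hg2]
            have hmul : x' i * tauA n τ α i (x i) ≤ x' i * tauA n τ α i (x' i) :=
              mul_le_mul_of_nonneg_left hTle (hx'0 i)
            have hrng : tauA n τ α i (x i) * (x i - x' i)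
                = x i * tauA n τ α i (x i) - x' i * tauA n τ α i (x i) := by ring
            rw [hrng]
            linarith [hmul]
          have bound2 : tauA n τ α p (x p)
              ≤ (TEG n τ α p (x' p) - TEG n τ α p (x p))/(x' p - x p) := by
            rw [le_div_iff₀ (by linarith)]
            have hg1 : TEG n τ α p (x p) = x p * tauA n τ α p (x p) := rfl
            have hg2 : TEG n τ α p (x' p) = x' p * tauA n τ α p (x' p) := rfl
            rw [hg1, hg2]
            have hTpm : tauA n τ α p (x p) ≤ tauA n τ α p (x' p) :=
              hTm p (x p) (x' p) (hx0 p) (le_of_lt hp2)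
            have hmul : x' p * tauA n τ α p (x p) ≤ x' p * tauA n τ α p (x' p) :=
              mul_le_mul_of_nonneg_left hTpm (hx'0 p)
            have hrng : tauA n τ α p (x p) * (x' p - x p)
                = x' p * tauA n τ α p (x p) - x p * tauA n τ α p (x p) := by ring
            rw [hrng]
            linarith [hmul]
          have midb := hTi p
          linarith
      rw [div_le_iff₀ (by linarith)] at hslope
      linarith
    have hpoint : ∀ i, κ*(x' i - x i) ≤ TEG n τ α i (x' i) - TEG n τ α i (x i) := by
      intro i
      rcases lt_trichotomy (x i) (x' i) with h | h | h
      · exact hup i h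
      · rw [h]; simp
      · have := hdown i h
        linarith
    have hsum := Finset.sum_le_sum (fun i (_ : i ∈ univ) => hpoint i)
    rw [← Finset.mul_sum, Finset.sum_sub_distrib, Finset.sum_sub_distrib, hxsum, hx'sum] at hsum
    linarith
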